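/- For integers n ≥ 1, d ≥ 3 with λ = (d−2)/2, define α(n) := ∫₀^π v_n(θ)(sin θ)^{2λ} (∫₀^θ (sin t)^{−2λ} ∫₀^t (sin u)^{2λ} du dt) dθ. Then there exist constants A, B > 0 depending only on d such that A/n ≤ α(n) ≤ B/n for all n ≥ 1. -/

import Mathlib

open Real MeasureTheory Set intervalIntegral

namespace Voro

noncomputable def G (p : ℕ) (t : ℝ) : ℝ := ∫ u in (0:ℝ)..t, Real.sin u ^ p
noncomputable def g (p : ℕ) (t : ℝ) : ℝ := (Real.sin t ^ p)⁻¹ * G p t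
noncomputable def F (p : ℕ) (θ : ℝ) : ℝ := ∫ t in (0:ℝ)..θ, g p t
noncomputable def w (p n : ℕ) (θ : ℝ) : ℝ := Real.cos (θ/2) ^ (2*n) * Real.sin θ ^ p

variable {p : ℕ}

lemma G_cont (p : ℕ) : Continuous (G p) := by
  apply intervalIntegral.continuous_primitive
  intro a b
  exact ((continuous_sin.pow p)).intervalIntegrable a b

lemma G_nonneg {p : ℕ} {t : ℝ} (h0 : 0 ≤ t) (hπ : t ≤ π) : 0 ≤ G p t := by
  apply intervalIntegral.integral_nonneg h0
  intro u hu
  exact pow_nonneg (sin_nonneg_of_nonneg_of_le_pi hu.1 (hu.2.trans hπ)) p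

lemma G_le {p : ℕ} {t : ℝ} (h0 : 0 ≤ t) (hπ : t ≤ π) :
    G p t ≤ t ^ (p+1) / (p+1) := by
  have h1 : G p t ≤ ∫ u in (0:ℝ)..t, u ^ p := by
    apply intervalIntegral.integral_mono_on h0
    · exact ((continuous_sin.pow p)).intervalIntegrable 0 t
    · exact (continuous_pow p).intervalIntegrable 0 t
    · intro u hu
      exact pow_le_pow_left₀ (sin_nonneg_of_nonneg_of_le_pi hu.1 (hu.2.trans hπ))
        (Real.sin_le hu.1) p
  rw [integral_pow] at h1
  calc G p t ≤ (t ^ (p+1) - 0 ^ (p+1)) / (p+1) := h1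
    _ = t ^ (p+1) / (p+1) := by rw [zero_pow (Nat.succ_ne_zero p)]; ring

lemma G_le_pi {p : ℕ} {t : ℝ} (h0 : 0 ≤ t) (hπ : t ≤ π) : G p t ≤ π := by
  have h1 : G p t ≤ ∫ _u in (0:ℝ)..t, (1:ℝ) := by
    apply intervalIntegral.integral_mono_on h0
    · exact ((continuous_sin.pow p)).intervalIntegrable 0 t
    · exact continuous_const.intervalIntegrable 0 t
    · intro u hu
      exact pow_le_one₀ (sin_nonneg_of_nonneg_of_le_pi hu.1 (hu.2.trans hπ)) (Real.sin_le_one u)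
  simpa using h1.trans (by simpa using hπ)

lemma G_ge {p : ℕ} {t : ℝ} (h0 : 0 ≤ t) (h2 : t ≤ π/2) :
    (2/π)^p * (t ^ (p+1) / (p+1)) ≤ G p t := by
  have h1 : (∫ u in (0:ℝ)..t, (2/π)^p * u ^ p) ≤ G p t := by
    apply intervalIntegral.integral_mono_on h0
    · exact (continuous_const.mul (continuous_pow p)).intervalIntegrable 0 t
    · exact ((continuous_sin.pow p)).intervalIntegrable 0 t
    · intro u hu
      have := Real.mul_le_sin hu.1 (hu.2.trans h2)
      calc (2/π)^p * u ^ p = (2/π * u) ^ p := by rw [mul_pow]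
        _ ≤ Real.sin u ^ p :=
          pow_le_pow_left₀ (mul_nonneg (by positivity) hu.1) this p
  rw [intervalIntegral.integral_const_mul, integral_pow] at h1
  calc (2/π)^p * (t ^ (p+1) / (p+1)) = (2/π)^p * ((t ^ (p+1) - 0 ^ (p+1)) / (p+1)) := by
        rw [zero_pow (Nat.succ_ne_zero p)]; ring
    _ ≤ G p t := h1

lemma g_nonneg {p : ℕ} {t : ℝ} (h0 : 0 ≤ t) (hπ : t ≤ π) : 0 ≤ g p t :=
  mul_nonneg (inv_nonneg.2 (pow_nonneg (sin_nonneg_of_nonneg_of_le_pi h0 hπ) p)) (G_nonneg h0 hπ)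

lemma g_le_left {p : ℕ} {t : ℝ} (h0 : 0 ≤ t) (h2 : t ≤ π/2) :
    g p t ≤ (π/2)^p * t := by
  rcases eq_or_lt_of_le h0 with rfl | ht
  · simp [g, G]
  · have hπ2 : (0:ℝ) < π/2 := by positivity
    have hsin : 2/π * t ≤ Real.sin t := Real.mul_le_sin h0 h2
    have hsp : (0:ℝ) < 2/π * t := by positivity
    have hinv : (Real.sin t ^ p)⁻¹ ≤ ((2/π * t) ^ p)⁻¹ := by
      apply inv_anti₀ (by positivity)
      exact pow_le_pow_left₀ hsp.le hsin p
    have hG : G p t ≤ t ^ (p+1) / (p+1) := G_le h0 (h2.trans (by linarith [pi_pos]))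
    have hGnn : 0 ≤ G p t := G_nonneg h0 (h2.trans (by linarith [pi_pos]))
    calc g p t ≤ ((2/π * t) ^ p)⁻¹ * (t ^ (p+1) / (p+1)) := by
          apply mul_le_mul hinv hG hGnn (by positivity)
      _ = (π/2)^p * (t / (p+1)) := by
          have htne : t ≠ 0 := ne_of_gt ht
          have hπne : π ≠ 0 := pi_ne_zero
          have hp1 : ((p:ℝ)+1) ≠ 0 := by positivity
          rw [pow_succ]
          field_simp
          rw [← mul_pow]; field_simp
      _ ≤ (π/2)^p * t := by
          apply mul_le_mul_of_nonneg_left _ (by positivity)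
          apply div_le_self h0
          have : (0:ℝ) ≤ p := Nat.cast_nonneg p
          linarith


lemma g_ge {t : ℝ} (h0 : 0 ≤ t) (h1 : t ≤ 1) :
    (2/π)^p / (p+1) * t ≤ g p t := by
  rcases eq_or_lt_of_le h0 with rfl | ht
  · simp [g, G]
  · have hπ4 : t ≤ π/2 := h1.trans (by linarith [pi_gt_three])
    have hsinpos : 0 < Real.sin t := Real.sin_pos_of_pos_of_lt_pi ht
      (lt_of_le_of_lt hπ4 (by linarith [pi_pos]))
    have hsin_le : Real.sin t ≤ t := Real.sin_le h0
    have hinv : (t ^ p)⁻¹ ≤ (Real.sin t ^ p)⁻¹ := by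
      apply inv_anti₀ (by positivity)
      exact pow_le_pow_left₀ hsinpos.le hsin_le p
    have hG : (2/π)^p * (t ^ (p+1) / (p+1)) ≤ G p t := G_ge h0 hπ4
    have hGnn : (0:ℝ) ≤ (2/π)^p * (t ^ (p+1) / (p+1)) := by positivity
    calc (2/π)^p / (p+1) * t = (t ^ p)⁻¹ * ((2/π)^p * (t ^ (p+1) / (p+1))) := by
          have htne : t ≠ 0 := ne_of_gt ht
          rw [pow_succ]; field_simp
      _ ≤ (Real.sin t ^ p)⁻¹ * G p t := by
          apply mul_le_mul hinv hG hGnn (by positivity)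
      _ = g p t := rfl

lemma g_le_right {t : ℝ} (h2 : π/2 ≤ t) (hπ : t < π) :
    g p t ≤ π * (π/2)^p * ((π - t)^p)⁻¹ := by
  have hs : π - t ≤ π/2 := by linarith
  have hspos : 0 < π - t := by linarith
  have hsin : 2/π * (π - t) ≤ Real.sin t := by
    rw [← Real.sin_pi_sub]
    exact Real.mul_le_sin hspos.le hs
  have hsinpos : 0 < 2/π * (π - t) := by positivity
  have hinv : (Real.sin t ^ p)⁻¹ ≤ ((2/π * (π - t)) ^ p)⁻¹ := by
    apply inv_anti₀ (by positivity)
    exact pow_le_pow_left₀ hsinpos.le hsin p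
  have h0t : 0 ≤ t := le_trans (by positivity) h2
  have hG : G p t ≤ π := G_le_pi h0t hπ.le
  have hGnn : 0 ≤ G p t := by
    apply intervalIntegral.integral_nonneg h0t
    intro u hu
    exact pow_nonneg (Real.sin_nonneg_of_nonneg_of_le_pi hu.1 (hu.2.trans hπ.le)) p
  calc g p t ≤ ((2/π * (π - t)) ^ p)⁻¹ * π := by
        apply mul_le_mul hinv hG hGnn (by positivity)
    _ = π * (π/2)^p * ((π - t)^p)⁻¹ := by
        have hπne : π ≠ 0 := pi_ne_zero
        have hsne : π - t ≠ 0 := ne_of_gt hspos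
        rw [mul_pow]
        field_simp
        rw [div_pow]; field_simp
        rw [div_pow]; field_simp

lemma g_contOn : ContinuousOn (g p) (Set.Ioo 0 π) := by
  apply ContinuousOn.mul
  · apply ContinuousOn.inv₀
    · exact (continuous_sin.pow p).continuousOn
    · intro t ht
      exact pow_ne_zero p (ne_of_gt (Real.sin_pos_of_pos_of_lt_pi ht.1 ht.2))
  · exact (G_cont p).continuousOn


lemma g_bound {b : ℝ} (hb : b < π) {t : ℝ} (h0 : 0 < t) (htb : t ≤ b) :
    g p t ≤ (π/2)^(p+1) + π * (π/2)^p * ((π - b)^p)⁻¹ := by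
  have hbπ : 0 < π - b := by linarith
  rcases le_or_gt t (π/2) with h | h
  · have h1 : g p t ≤ (π/2)^p * t := g_le_left h0.le h
    have h2 : (π/2)^p * t ≤ (π/2)^(p+1) := by
      rw [pow_succ]
      exact mul_le_mul_of_nonneg_left h (by positivity)
    have h3 : (0:ℝ) ≤ π * (π/2)^p * ((π - b)^p)⁻¹ := by positivity
    linarith
  · have h1 : g p t ≤ π * (π/2)^p * ((π - t)^p)⁻¹ := g_le_right h.le (lt_of_le_of_lt htb hb)
    have h2 : ((π - t)^p)⁻¹ ≤ ((π - b)^p)⁻¹ := by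
      apply inv_anti₀ (by positivity)
      apply pow_le_pow_left₀ hbπ.le (by linarith)
    have h3 : (0:ℝ) ≤ (π/2)^(p+1) := by positivity
    have h4 : π * (π/2)^p * ((π - t)^p)⁻¹ ≤ π * (π/2)^p * ((π - b)^p)⁻¹ :=
      mul_le_mul_of_nonneg_left h2 (by positivity)
    linarith

lemma g_intOn {b : ℝ} (hb0 : 0 ≤ b) (hb : b < π) : IntervalIntegrable (g p) volume 0 b := by
  rw [intervalIntegrable_iff_integrableOn_Ioc_of_le hb0]
  have hmeas : AEStronglyMeasurable (g p) (volume.restrict (Ioc 0 b)) := by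
    have hsub : Set.Ioc 0 b ⊆ Set.Ioo 0 π := fun t ht => ⟨ht.1, lt_of_le_of_lt ht.2 hb⟩
    exact (g_contOn.mono hsub).aestronglyMeasurable measurableSet_Ioc
  apply Integrable.mono' (g := fun _ => (π/2)^(p+1) + π * (π/2)^p * ((π - b)^p)⁻¹)
    (integrableOn_const measure_Ioc_lt_top.ne) hmeas
  · filter_upwards [ae_restrict_mem measurableSet_Ioc] with t ht
    rw [Real.norm_eq_abs, abs_of_nonneg (g_nonneg ht.1.le (le_trans ht.2 hb.le))]
    exact g_bound hb ht.1 ht.2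


lemma F_nonneg {θ : ℝ} (h0 : 0 ≤ θ) (hπ : θ ≤ π) : 0 ≤ F p θ := by
  apply intervalIntegral.integral_nonneg h0
  intro t ht
  exact g_nonneg ht.1 (ht.2.trans hπ)

lemma F_le_left {θ : ℝ} (h0 : 0 ≤ θ) (h2 : θ ≤ π/2) :
    F p θ ≤ (π/2)^p * θ^2 / 2 := by
  have h1 : F p θ ≤ ∫ t in (0:ℝ)..θ, (π/2)^p * t := by
    apply intervalIntegral.integral_mono_on h0
    · exact g_intOn h0 (lt_of_le_of_lt h2 (by linarith [pi_pos]))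
    · exact (continuous_const.mul continuous_id).intervalIntegrable 0 θ
    · intro t ht
      exact g_le_left ht.1 (ht.2.trans h2)
  rw [intervalIntegral.integral_const_mul, integral_id] at h1
  calc F p θ ≤ (π/2)^p * ((θ^2 - 0^2)/2) := h1
    _ = (π/2)^p * θ^2 / 2 := by ring

lemma F_ge {θ : ℝ} (h0 : 0 ≤ θ) (h1 : θ ≤ 1) :
    (2/π)^p / (p+1) * (θ^2/2) ≤ F p θ := by
  have hθπ : θ < π := lt_of_le_of_lt h1 (by linarith [pi_gt_three])
  have h2 : (∫ t in (0:ℝ)..θ, (2/π)^p / (p+1) * t) ≤ F p θ := by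
    apply intervalIntegral.integral_mono_on h0
    · exact (continuous_const.mul continuous_id).intervalIntegrable 0 θ
    · exact g_intOn h0 hθπ
    · intro t ht
      exact g_ge ht.1 (ht.2.trans h1)
  rw [intervalIntegral.integral_const_mul, integral_id] at h2
  calc (2/π)^p / (p+1) * (θ^2/2) = (2/π)^p / (p+1) * ((θ^2 - 0^2)/2) := by ring
    _ ≤ F p θ := h2

lemma F_le_right {θ : ℝ} (h2 : π/2 ≤ θ) (hπ : θ < π) :
    F p θ ≤ (π/2)^p * π^2/8 + π^2/2 * (π/2)^p * ((π - θ)^p)⁻¹ := by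
  have hπ2 : (0:ℝ) < π/2 := by positivity
  have h0θ : (0:ℝ) ≤ θ := le_trans hπ2.le h2
  have hsplit : F p θ = F p (π/2) + ∫ t in (π/2)..θ, g p t := by
    rw [F, F, intervalIntegral.integral_add_adjacent_intervals]
    · exact g_intOn hπ2.le (by linarith [pi_pos])
    · exact ((g_intOn h0θ hπ).mono_set (by
        rw [Set.uIcc_of_le h2, Set.uIcc_of_le h0θ]
        exact Set.Icc_subset_Icc hπ2.le le_rfl))
  have hF1 : F p (π/2) ≤ (π/2)^p * π^2/8 := by
    have := F_le_left (p := p) hπ2.le le_rfl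
    calc F p (π/2) ≤ (π/2)^p * (π/2)^2 / 2 := this
      _ = (π/2)^p * π^2/8 := by ring
  have hF2 : (∫ t in (π/2)..θ, g p t) ≤ π^2/2 * (π/2)^p * ((π - θ)^p)⁻¹ := by
    have hbd : ∀ t ∈ Set.Icc (π/2) θ, g p t ≤ π * (π/2)^p * ((π - θ)^p)⁻¹ := by
      intro t ht
      have htπ : t < π := lt_of_le_of_lt ht.2 hπ
      calc g p t ≤ π * (π/2)^p * ((π - t)^p)⁻¹ := g_le_right ht.1 htπ
        _ ≤ π * (π/2)^p * ((π - θ)^p)⁻¹ := by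
            apply mul_le_mul_of_nonneg_left _ (by positivity)
            apply inv_anti₀ (pow_pos (by linarith) p)
            exact pow_le_pow_left₀ (by linarith) (by linarith [ht.2]) p
    have h3 : (∫ t in (π/2)..θ, g p t) ≤ ∫ _t in (π/2)..θ, π * (π/2)^p * ((π - θ)^p)⁻¹ := by
      apply intervalIntegral.integral_mono_on h2
      · exact ((g_intOn h0θ hπ).mono_set (by
          rw [Set.uIcc_of_le h2, Set.uIcc_of_le h0θ]
          exact Set.Icc_subset_Icc hπ2.le le_rfl))
      · exact continuous_const.intervalIntegrable _ _
      · exact hbd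
    rw [intervalIntegral.integral_const, smul_eq_mul] at h3
    have hinvnn : (0:ℝ) ≤ π * (π/2)^p * ((π - θ)^p)⁻¹ :=
      mul_nonneg (by positivity) (inv_nonneg.2 (pow_nonneg (by linarith) p))
    calc (∫ t in (π/2)..θ, g p t) ≤ (θ - π/2) * (π * (π/2)^p * ((π - θ)^p)⁻¹) := h3
      _ ≤ (π/2) * (π * (π/2)^p * ((π - θ)^p)⁻¹) := by
          apply mul_le_mul_of_nonneg_right (by linarith) hinvnn
      _ = π^2/2 * (π/2)^p * ((π - θ)^p)⁻¹ := by ring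
  linarith [hsplit, hF1, hF2]

lemma F_contOn : ContinuousOn (F p) (Set.Ico 0 π) := by
  intro θ hθ
  set b : ℝ := (θ + π)/2 with hbdef
  have hθb : θ < b := by simp only [hbdef]; linarith [hθ.2]
  have hbπ : b < π := by simp only [hbdef]; linarith [hθ.2]
  have hb0 : 0 ≤ b := by simp only [hbdef]; have := hθ.1; linarith [pi_pos]
  have hcont : ContinuousOn (F p) (Set.Icc 0 b) := by
    have h_int : IntervalIntegrable (g p) volume 0 b := g_intOn hb0 hbπ
    have := intervalIntegral.continuousOn_primitive_interval'
      (μ := volume) (b₁ := 0) (b₂ := b) (a := 0) h_int (by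
        rw [Set.uIcc_of_le hb0]; exact Set.left_mem_Icc.2 hb0)
    rw [Set.uIcc_of_le hb0] at this
    exact this
  have h1 : ContinuousWithinAt (F p) (Set.Icc 0 b) θ :=
    hcont θ ⟨hθ.1, hθb.le⟩
  apply ContinuousWithinAt.mono_of_mem_nhdsWithin h1
  rw [mem_nhdsWithin]
  exact ⟨Set.Iio b, isOpen_Iio, hθb, fun x hx => ⟨hx.2.1, hx.1.le⟩⟩


lemma cos_pow_le_exp {n : ℕ} {θ : ℝ} (h0 : 0 ≤ θ) (hπ : θ ≤ π) :
    Real.cos (θ/2) ^ (2*n) ≤ Real.exp (-(π^2)⁻¹ * (Real.sqrt n * θ)^2) := by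
  have hπpos := pi_pos
  have habs : |θ/2| ≤ π := by rw [abs_of_nonneg (by linarith)]; linarith
  have h1 : Real.cos (θ/2) ≤ 1 - θ^2/(2*π^2) := by
    have := Real.cos_le_one_sub_mul_cos_sq habs
    have hππ : π^2 > 0 := by positivity
    calc Real.cos (θ/2) ≤ 1 - 2/π^2 * (θ/2)^2 := this
      _ = 1 - θ^2/(2*π^2) := by field_simp
  have h2 : (1:ℝ) - θ^2/(2*π^2) ≤ Real.exp (-(θ^2/(2*π^2))) := by
    have := Real.add_one_le_exp (-(θ^2/(2*π^2)))
    linarith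
  have hcosnn : 0 ≤ Real.cos (θ/2) :=
    Real.cos_nonneg_of_mem_Icc ⟨by linarith, by linarith⟩
  calc Real.cos (θ/2) ^ (2*n) ≤ Real.exp (-(θ^2/(2*π^2))) ^ (2*n) :=
        pow_le_pow_left₀ hcosnn (h1.trans h2) (2*n)
    _ = Real.exp ((2*n : ℕ) * -(θ^2/(2*π^2))) := by rw [← Real.exp_nat_mul]
    _ = Real.exp (-(π^2)⁻¹ * (Real.sqrt n * θ)^2) := by
        congr 1
        rw [mul_pow, Real.sq_sqrt (Nat.cast_nonneg n)]
        push_cast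
        field_simp

lemma cos_pow_ge {n : ℕ} (hn : 1 ≤ n) {θ : ℝ} (h0 : 0 ≤ θ)
    (hθ : θ ≤ (Real.sqrt n)⁻¹) :
    (3/4 : ℝ) ≤ Real.cos (θ/2) ^ (2*n) := by
  have hnR : (1:ℝ) ≤ (n:ℝ) := by exact_mod_cast hn
  have hnpos : (0:ℝ) < n := by linarith
  have hsq : θ^2 ≤ (n:ℝ)⁻¹ := by
    have hs : Real.sqrt n > 0 := Real.sqrt_pos.2 hnpos
    calc θ^2 ≤ ((Real.sqrt n)⁻¹)^2 := pow_le_pow_left₀ h0 hθ 2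
      _ = (n:ℝ)⁻¹ := by rw [inv_pow, Real.sq_sqrt hnpos.le]
  have h1 : 1 - 1/(8*n) ≤ Real.cos (θ/2) := by
    have := Real.one_sub_sq_div_two_le_cos (x := θ/2)
    have h2 : (θ/2)^2/2 = θ^2/8 := by ring
    have h3 : θ^2/8 ≤ 1/(8*n) := by
      rw [div_le_div_iff₀ (by norm_num) (by positivity)]
      calc θ^2 * (8*n) = (θ^2 * n) * 8 := by ring
        _ ≤ (n:ℝ)⁻¹ * n * 8 := by
            have := mul_le_mul_of_nonneg_right hsq (le_of_lt hnpos)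
            nlinarith
        _ = 1 * 8 := by field_simp
      -- goal: θ^2 * (8*n) ≤ 1 * 8
    linarith [this, h2 ▸ h3]
  have hbase : (0:ℝ) ≤ 1 - 1/(8*n) := by
    have : 1/(8*(n:ℝ)) ≤ 1/8 := by
      apply div_le_div_of_nonneg_left (by norm_num) (by norm_num)
      linarith
    linarith
  have hbern : (3/4 : ℝ) ≤ (1 - 1/(8*n)) ^ (2*n) := by
    have := one_add_mul_le_pow (a := -(1/(8*(n:ℝ)))) (by
      have : 1/(8*(n:ℝ)) ≤ 1/8 := by
        apply div_le_div_of_nonneg_left (by norm_num) (by norm_num); linarith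
      linarith) (2*n)
    have hcast : 1 + (2*n : ℕ) * -(1/(8*(n:ℝ))) = 1 - 1/4 := by
      push_cast
      field_simp
      ring
    rw [hcast] at this
    calc (3/4:ℝ) = 1 - 1/4 := by norm_num
      _ ≤ (1 + -(1/(8*(n:ℝ)))) ^ (2*n) := this
      _ = (1 - 1/(8*n)) ^ (2*n) := by ring_nf
  calc (3/4:ℝ) ≤ (1 - 1/(8*n)) ^ (2*n) := hbern
    _ ≤ Real.cos (θ/2) ^ (2*n) := pow_le_pow_left₀ hbase h1 (2*n)

lemma gauss_bound (k : ℕ) : ∃ K > (0:ℝ), ∀ n : ℕ, 1 ≤ n →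
    (∫ θ in (0:ℝ)..π, Real.exp (-(π^2)⁻¹ * (Real.sqrt n * θ)^2) * θ^k)
      ≤ K * ((Real.sqrt n)^(k+1))⁻¹ := by
  set f : ℝ → ℝ := fun x => x^k * Real.exp (-(π^2)⁻¹ * x^2) with hf
  have hb : (0:ℝ) < (π^2)⁻¹ := by positivity
  have hf_int : Integrable f := by
    have h := integrable_rpow_mul_exp_neg_mul_sq hb (s := (k:ℝ))
      (by have : (0:ℝ) ≤ (k:ℝ) := Nat.cast_nonneg k; linarith)
    have heq : (fun x : ℝ => x ^ ((k:ℝ)) * Real.exp (-(π^2)⁻¹ * x^2)) = f := by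
      funext x; rw [Real.rpow_natCast]
    rwa [heq] at h
  have hf_nonneg : ∀ x : ℝ, 0 ≤ x → 0 ≤ f x := by
    intro x hx
    exact mul_nonneg (pow_nonneg hx k) (Real.exp_nonneg _)
  refine ⟨(∫ x in Set.Ioi (0:ℝ), f x) + 1, by
    have : 0 ≤ ∫ x in Set.Ioi (0:ℝ), f x :=
      setIntegral_nonneg measurableSet_Ioi (fun x hx => hf_nonneg x (le_of_lt hx))
    linarith, ?_⟩
  intro n hn
  have hnR : (1:ℝ) ≤ (n:ℝ) := by exact_mod_cast hn
  set s : ℝ := Real.sqrt n with hs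
  have hspos : 0 < s := Real.sqrt_pos.2 (by linarith)
  have hsne : s ≠ 0 := ne_of_gt hspos
  have key : (∫ θ in (0:ℝ)..π, Real.exp (-(π^2)⁻¹ * (s * θ)^2) * θ^k)
      = (s^k)⁻¹ * ∫ θ in (0:ℝ)..π, f (s * θ) := by
    rw [← intervalIntegral.integral_const_mul]
    apply intervalIntegral.integral_congr
    intro θ _
    simp only [hf]
    rw [mul_pow]
    field_simp
    ring
  have comp : (∫ θ in (0:ℝ)..π, f (s * θ)) = s⁻¹ • ∫ x in (0:ℝ)..(s*π), f x := by
    have := intervalIntegral.integral_comp_mul_left (a := (0:ℝ)) (b := π) f hsne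
    simpa using this
  have tail : (∫ x in (0:ℝ)..(s*π), f x) ≤ ∫ x in Set.Ioi (0:ℝ), f x := by
    rw [intervalIntegral.integral_of_le (by positivity)]
    apply setIntegral_mono_set hf_int.integrableOn
    · filter_upwards [ae_restrict_mem measurableSet_Ioi] with x hx
      exact hf_nonneg x (le_of_lt hx)
    · exact HasSubset.Subset.eventuallyLE Set.Ioc_subset_Ioi_self
  have tailnn : (0:ℝ) ≤ ∫ x in (0:ℝ)..(s*π), f x := by
    rw [intervalIntegral.integral_of_le (by positivity)]
    apply setIntegral_nonneg measurableSet_Ioc (fun x hx => hf_nonneg x (le_of_lt hx.1))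
  rw [key, comp, smul_eq_mul]
  have h1 : (s^k)⁻¹ * (s⁻¹ * ∫ x in (0:ℝ)..(s*π), f x)
      ≤ (s^k)⁻¹ * (s⁻¹ * ((∫ x in Set.Ioi (0:ℝ), f x) + 1)) := by
    apply mul_le_mul_of_nonneg_left _ (by positivity)
    apply mul_le_mul_of_nonneg_left _ (by positivity)
    linarith [tail]
  calc (s^k)⁻¹ * (s⁻¹ * ∫ x in (0:ℝ)..(s*π), f x)
      ≤ (s^k)⁻¹ * (s⁻¹ * ((∫ x in Set.Ioi (0:ℝ), f x) + 1)) := h1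
    _ = ((∫ x in Set.Ioi (0:ℝ), f x) + 1) * ((s^(k+1))⁻¹) := by
        rw [pow_succ]
        field_simp


lemma continuous_w (p n : ℕ) : Continuous (w p n) := by
  exact ((Real.continuous_cos.comp (continuous_id.div_const 2)).pow _).mul
    (Real.continuous_sin.pow p)

lemma w_nonneg (p n : ℕ) {θ : ℝ} (h0 : 0 ≤ θ) (hπ : θ ≤ π) : 0 ≤ w p n θ := by
  apply mul_nonneg
  · exact (even_two_mul n).pow_nonneg _
  · exact pow_nonneg (Real.sin_nonneg_of_nonneg_of_le_pi h0 hπ) p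

lemma cospow_le_one (n : ℕ) (θ : ℝ) : Real.cos (θ/2) ^ (2*n) ≤ 1 := by
  rw [pow_mul]
  apply pow_le_one₀ (sq_nonneg _)
  rw [sq_le_one_iff_abs_le_one]
  exact Real.abs_cos_le_one _

noncomputable def Kd (p : ℕ) : ℝ := π^p * ((π/2)^p * π^2/8) + π^2/2 * (π/2)^p

lemma Kd_pos (p : ℕ) : 0 < Kd p := by unfold Kd; positivity

lemma sF_le_right (hp : 1 ≤ p) {θ : ℝ} (h2 : π/2 ≤ θ) (hπ : θ ≤ π) :
    Real.sin θ ^ p * F p θ ≤ Kd p := by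
  rcases eq_or_lt_of_le hπ with rfl | hlt
  · rw [Real.sin_pi, zero_pow (by omega : p ≠ 0), zero_mul]
    exact (Kd_pos p).le
  · have h0θ : 0 ≤ θ := le_trans (by positivity) h2
    have hsnn : 0 ≤ Real.sin θ ^ p :=
      pow_nonneg (Real.sin_nonneg_of_nonneg_of_le_pi h0θ hπ) p
    have hF := F_le_right (p := p) h2 hlt
    have step : Real.sin θ ^ p * F p θ
        ≤ Real.sin θ ^ p * ((π/2)^p * π^2/8 + π^2/2 * (π/2)^p * ((π - θ)^p)⁻¹) :=
      mul_le_mul_of_nonneg_left hF hsnn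
    have hsin_pi : Real.sin θ ^ p ≤ π^p := by
      apply pow_le_pow_left₀ (Real.sin_nonneg_of_nonneg_of_le_pi h0θ hπ)
      exact (Real.sin_le_one θ).trans (by linarith [pi_gt_three])
    have hsin_s : Real.sin θ ^ p * ((π - θ)^p)⁻¹ ≤ 1 := by
      have hsθ : Real.sin θ ≤ π - θ := by
        rw [← Real.sin_pi_sub]
        exact Real.sin_le (by linarith)
      have hppos : 0 < (π - θ)^p := pow_pos (by linarith) p
      rw [← div_eq_mul_inv, div_le_one hppos]
      exact pow_le_pow_left₀ (Real.sin_nonneg_of_nonneg_of_le_pi h0θ hπ) hsθ p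
    have step2 : Real.sin θ ^ p * ((π/2)^p * π^2/8 + π^2/2 * (π/2)^p * ((π - θ)^p)⁻¹)
        = Real.sin θ ^ p * ((π/2)^p * π^2/8)
          + π^2/2 * (π/2)^p * (Real.sin θ ^ p * ((π - θ)^p)⁻¹) := by ring
    calc Real.sin θ ^ p * F p θ
        ≤ Real.sin θ ^ p * ((π/2)^p * π^2/8)
          + π^2/2 * (π/2)^p * (Real.sin θ ^ p * ((π - θ)^p)⁻¹) := step.trans (le_of_eq step2)
      _ ≤ π^p * ((π/2)^p * π^2/8) + π^2/2 * (π/2)^p * 1 := by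
          have t1 := mul_le_mul_of_nonneg_right hsin_pi
            (by positivity : (0:ℝ) ≤ (π/2)^p * π^2/8)
          have t2 := mul_le_mul_of_nonneg_left hsin_s
            (by positivity : (0:ℝ) ≤ π^2/2 * (π/2)^p)
          linarith
      _ ≤ Kd p := by unfold Kd; ring_nf; linarith [sq_nonneg π]

noncomputable def Kbig (p : ℕ) : ℝ := (π/2)^p/2 * π^(p+2) + Kd p

lemma sF_le_left (hp : 1 ≤ p) {θ : ℝ} (h0 : 0 ≤ θ) (h2 : θ ≤ π/2) :
    Real.sin θ ^ p * F p θ ≤ (π/2)^p/2 * θ^(p+2) := by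
  have hπθ : θ ≤ π := h2.trans (by linarith [pi_pos])
  have hsnn : 0 ≤ Real.sin θ ^ p :=
    pow_nonneg (Real.sin_nonneg_of_nonneg_of_le_pi h0 hπθ) p
  have h1 : Real.sin θ ^ p ≤ θ^p :=
    pow_le_pow_left₀ (Real.sin_nonneg_of_nonneg_of_le_pi h0 hπθ) (Real.sin_le h0) p
  have h2' : F p θ ≤ (π/2)^p * θ^2/2 := F_le_left h0 h2
  calc Real.sin θ ^ p * F p θ ≤ θ^p * ((π/2)^p * θ^2/2) := by
        apply mul_le_mul h1 h2' (F_nonneg h0 hπθ) (pow_nonneg h0 p)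
    _ = (π/2)^p/2 * (θ^p * θ^2) := by ring
    _ = (π/2)^p/2 * θ^(p+2) := by rw [← pow_add]

lemma wF_le (hp : 1 ≤ p) (n : ℕ) {θ : ℝ} (h0 : 0 ≤ θ) (hπ : θ ≤ π) :
    w p n θ * F p θ ≤ Kbig p := by
  have hc1 : Real.cos (θ/2) ^ (2*n) ≤ 1 := cospow_le_one n θ
  have hcnn : 0 ≤ Real.cos (θ/2) ^ (2*n) := (even_two_mul n).pow_nonneg _
  rcases le_or_gt θ (π/2) with h | h
  · have := sF_le_left hp h0 h
    have hθπ : θ^(p+2) ≤ π^(p+2) := pow_le_pow_left₀ h0 hπ (p+2)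
    have hsFnn : 0 ≤ Real.sin θ ^ p * F p θ :=
      mul_nonneg (pow_nonneg (Real.sin_nonneg_of_nonneg_of_le_pi h0 hπ) p) (F_nonneg h0 hπ)
    calc w p n θ * F p θ = Real.cos (θ/2) ^ (2*n) * (Real.sin θ ^ p * F p θ) := by
          unfold w; ring
      _ ≤ 1 * ((π/2)^p/2 * θ^(p+2)) := by
          apply mul_le_mul hc1 this hsFnn zero_le_one
      _ ≤ (π/2)^p/2 * π^(p+2) := by
          rw [one_mul]; gcongr
      _ ≤ Kbig p := by unfold Kbig; linarith [Kd_pos p]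
  · have := sF_le_right hp h.le hπ
    have hsFnn : 0 ≤ Real.sin θ ^ p * F p θ :=
      mul_nonneg (pow_nonneg (Real.sin_nonneg_of_nonneg_of_le_pi h0 hπ) p) (F_nonneg h0 hπ)
    calc w p n θ * F p θ = Real.cos (θ/2) ^ (2*n) * (Real.sin θ ^ p * F p θ) := by
          unfold w; ring
      _ ≤ 1 * Kd p := by
          apply mul_le_mul hc1 this hsFnn zero_le_one
      _ ≤ Kbig p := by
          rw [one_mul]; unfold Kbig
          have : (0:ℝ) ≤ (π/2)^p/2 * π^(p+2) := by positivity
          linarith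

lemma wF_nonneg (p n : ℕ) {θ : ℝ} (h0 : 0 ≤ θ) (hπ : θ ≤ π) : 0 ≤ w p n θ * F p θ :=
  mul_nonneg (w_nonneg p n h0 hπ) (F_nonneg h0 hπ)

lemma wF_int (hp : 1 ≤ p) (n : ℕ) :
    IntervalIntegrable (fun θ => w p n θ * F p θ) volume 0 π := by
  rw [intervalIntegrable_iff_integrableOn_Ioc_of_le pi_pos.le]
  have hmeasF : AEStronglyMeasurable (F p) (volume.restrict (Ioc 0 π)) := by
    rw [← Measure.restrict_congr_set Ioo_ae_eq_Ioc]
    exact (F_contOn.mono (fun x hx => ⟨hx.1.le, hx.2⟩)).aestronglyMeasurable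
      measurableSet_Ioo
  have hmeas : AEStronglyMeasurable (fun θ => w p n θ * F p θ) (volume.restrict (Ioc 0 π)) :=
    ((continuous_w p n).aestronglyMeasurable).mul hmeasF
  apply Integrable.mono' (g := fun _ => Kbig p)
    (integrableOn_const measure_Ioc_lt_top.ne) hmeas
  filter_upwards [ae_restrict_mem measurableSet_Ioc] with θ hθ
  rw [Real.norm_eq_abs, abs_of_nonneg (wF_nonneg p n hθ.1.le hθ.2)]
  exact wF_le hp n hθ.1.le hθ.2


-- facts about sqrt
lemma sqrt_ge_one {n : ℕ} (hn : 1 ≤ n) : (1:ℝ) ≤ Real.sqrt n := by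
  rw [show (1:ℝ) = Real.sqrt 1 by simp]
  exact Real.sqrt_le_sqrt (by exact_mod_cast hn)

lemma sqrt_le_n {n : ℕ} (hn : 1 ≤ n) : Real.sqrt n ≤ (n:ℝ) := by
  have h1 : (1:ℝ) ≤ (n:ℝ) := by exact_mod_cast hn
  have h2 := Real.sqrt_le_sqrt (show (n:ℝ) ≤ (n:ℝ)^2 by nlinarith)
  rwa [Real.sqrt_sq (by linarith)] at h2

-- lower bound for In
lemma In_ge {n : ℕ} (hn : 1 ≤ n) :
    3/4 * (2/π)^p / (p+1) * ((Real.sqrt n)^(p+1))⁻¹ ≤ ∫ θ in (0:ℝ)..π, w p n θ := by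
  have hπ3 := pi_gt_three
  set a : ℝ := (Real.sqrt n)⁻¹ with ha
  have hs1 : (1:ℝ) ≤ Real.sqrt n := sqrt_ge_one hn
  have ha0 : 0 < a := by rw [ha]; positivity
  have ha1 : a ≤ 1 := (inv_anti₀ one_pos hs1).trans_eq inv_one
  have haπ : a ≤ π := by linarith
  have hsplit : (∫ θ in (0:ℝ)..π, w p n θ)
      = (∫ θ in (0:ℝ)..a, w p n θ) + ∫ θ in a..π, w p n θ :=
    (intervalIntegral.integral_add_adjacent_intervals
      ((continuous_w p n).intervalIntegrable _ _)
      ((continuous_w p n).intervalIntegrable _ _)).symm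
  have h2 : 0 ≤ ∫ θ in a..π, w p n θ := by
    apply intervalIntegral.integral_nonneg haπ
    intro θ hθ
    exact w_nonneg p n (le_trans ha0.le hθ.1) hθ.2
  have h1 : (∫ θ in (0:ℝ)..a, 3/4 * ((2/π)^p * θ^p)) ≤ ∫ θ in (0:ℝ)..a, w p n θ := by
    apply intervalIntegral.integral_mono_on ha0.le
    · exact (continuous_const.mul (continuous_const.mul (continuous_pow p))).intervalIntegrable _ _
    · exact (continuous_w p n).intervalIntegrable _ _
    · intro θ hθ
      have hθ1 : θ ≤ 1 := hθ.2.trans ha1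
      have hθ2 : θ ≤ π/2 := by linarith
      have hc : (3/4 : ℝ) ≤ Real.cos (θ/2) ^ (2*n) := cos_pow_ge hn hθ.1 hθ.2
      have hsin : 2/π * θ ≤ Real.sin θ := Real.mul_le_sin hθ.1 hθ2
      have hsp : (2/π * θ)^p ≤ Real.sin θ ^ p :=
        pow_le_pow_left₀ (mul_nonneg (by positivity) hθ.1) hsin p
      calc 3/4 * ((2/π)^p * θ^p) = 3/4 * (2/π * θ)^p := by rw [mul_pow]
        _ ≤ Real.cos (θ/2) ^ (2*n) * Real.sin θ ^ p := by
            apply mul_le_mul hc hsp (pow_nonneg (mul_nonneg (by positivity) hθ.1) p)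
            exact (even_two_mul n).pow_nonneg _
        _ = w p n θ := rfl
  have hval : (∫ θ in (0:ℝ)..a, 3/4 * ((2/π)^p * θ^p))
      = 3/4 * (2/π)^p / (p+1) * ((Real.sqrt n)^(p+1))⁻¹ := by
    rw [intervalIntegral.integral_const_mul, intervalIntegral.integral_const_mul, integral_pow]
    rw [zero_pow (Nat.succ_ne_zero p)]
    rw [ha, ← inv_pow]
    field_simp
    ring
  linarith [hval ▸ h1]

-- upper bound for In by the gaussian integral
lemma In_le_gauss (n : ℕ) :
    (∫ θ in (0:ℝ)..π, w p n θ)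
      ≤ ∫ θ in (0:ℝ)..π, Real.exp (-(π^2)⁻¹ * (Real.sqrt n * θ)^2) * θ^p := by
  apply intervalIntegral.integral_mono_on pi_pos.le
  · exact (continuous_w p n).intervalIntegrable _ _
  · apply Continuous.intervalIntegrable
    apply Continuous.mul _ (continuous_pow p)
    exact Real.continuous_exp.comp (by continuity)
  · intro θ hθ
    have hsp : Real.sin θ ^ p ≤ θ^p :=
      pow_le_pow_left₀ (Real.sin_nonneg_of_nonneg_of_le_pi hθ.1 hθ.2) (Real.sin_le hθ.1) p
    apply mul_le_mul (cos_pow_le_exp hθ.1 hθ.2) hsp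
      (pow_nonneg (Real.sin_nonneg_of_nonneg_of_le_pi hθ.1 hθ.2) p) (Real.exp_nonneg _)

-- upper bound for Jn, piece 1
lemma J1_le (hp : 1 ≤ p) (n : ℕ) :
    (∫ θ in (0:ℝ)..(π/2), w p n θ * F p θ)
      ≤ (π/2)^p/2 * ∫ θ in (0:ℝ)..π, Real.exp (-(π^2)⁻¹ * (Real.sqrt n * θ)^2) * θ^(p+2) := by
  have hcont : Continuous (fun θ : ℝ => Real.exp (-(π^2)⁻¹ * (Real.sqrt n * θ)^2) * θ^(p+2)) := by
    apply Continuous.mul _ (continuous_pow (p+2))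
    exact Real.continuous_exp.comp (by continuity)
  have hπ2 : (0:ℝ) ≤ π/2 := by positivity
  have h1 : (∫ θ in (0:ℝ)..(π/2), w p n θ * F p θ)
      ≤ ∫ θ in (0:ℝ)..(π/2), (π/2)^p/2 * (Real.exp (-(π^2)⁻¹ * (Real.sqrt n * θ)^2) * θ^(p+2)) := by
    apply intervalIntegral.integral_mono_on hπ2
    · exact (wF_int hp n).mono_set (by
        rw [Set.uIcc_of_le hπ2, Set.uIcc_of_le pi_pos.le]
        exact Set.Icc_subset_Icc le_rfl (by linarith [pi_pos]))
    · exact (continuous_const.mul hcont).intervalIntegrable _ _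
    · intro θ hθ
      have hθπ : θ ≤ π := hθ.2.trans (by linarith [pi_pos])
      have hsF := sF_le_left hp hθ.1 hθ.2
      have hsFnn : 0 ≤ Real.sin θ ^ p * F p θ :=
        mul_nonneg (pow_nonneg (Real.sin_nonneg_of_nonneg_of_le_pi hθ.1 hθπ) p)
          (F_nonneg hθ.1 hθπ)
      calc w p n θ * F p θ = Real.cos (θ/2) ^ (2*n) * (Real.sin θ ^ p * F p θ) := by
            unfold w; ring
        _ ≤ Real.exp (-(π^2)⁻¹ * (Real.sqrt n * θ)^2) * ((π/2)^p/2 * θ^(p+2)) := by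
            apply mul_le_mul (cos_pow_le_exp hθ.1 hθπ) hsF hsFnn (Real.exp_nonneg _)
        _ = (π/2)^p/2 * (Real.exp (-(π^2)⁻¹ * (Real.sqrt n * θ)^2) * θ^(p+2)) := by ring
  rw [intervalIntegral.integral_const_mul] at h1
  apply h1.trans
  apply mul_le_mul_of_nonneg_left _ (by positivity)
  have hsplit : (∫ θ in (0:ℝ)..π, Real.exp (-(π^2)⁻¹ * (Real.sqrt n * θ)^2) * θ^(p+2))
      = (∫ θ in (0:ℝ)..(π/2), Real.exp (-(π^2)⁻¹ * (Real.sqrt n * θ)^2) * θ^(p+2))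
        + ∫ θ in (π/2)..π, Real.exp (-(π^2)⁻¹ * (Real.sqrt n * θ)^2) * θ^(p+2) :=
    (intervalIntegral.integral_add_adjacent_intervals
      (hcont.intervalIntegrable _ _) (hcont.intervalIntegrable _ _)).symm
  have h2 : 0 ≤ ∫ θ in (π/2)..π, Real.exp (-(π^2)⁻¹ * (Real.sqrt n * θ)^2) * θ^(p+2) := by
    apply intervalIntegral.integral_nonneg (by linarith [pi_pos])
    intro θ hθ
    exact mul_nonneg (Real.exp_nonneg _) (pow_nonneg (le_trans hπ2 hθ.1) _)
  linarith [hsplit]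

-- upper bound for Jn, piece 2
lemma J2_le (hp : 1 ≤ p) (n : ℕ) :
    (∫ θ in (π/2)..π, w p n θ * F p θ) ≤ π/2 * Kd p * (1/2 : ℝ)^n := by
  have hπ2 : (π/2 : ℝ) ≤ π := by linarith [pi_pos]
  have h1 : (∫ θ in (π/2)..π, w p n θ * F p θ)
      ≤ ∫ _θ in (π/2)..π, Kd p * (1/2:ℝ)^n := by
    apply intervalIntegral.integral_mono_on hπ2
    · exact (wF_int hp n).mono_set (by
        rw [Set.uIcc_of_le hπ2, Set.uIcc_of_le pi_pos.le]
        exact Set.Icc_subset_Icc (by positivity) le_rfl)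
    · exact continuous_const.intervalIntegrable _ _
    · intro θ hθ
      have h0θ : 0 ≤ θ := le_trans (by positivity) hθ.1
      have hcos : Real.cos (θ/2) ^ (2*n) ≤ (1/2:ℝ)^n := by
        have hc2 : Real.cos (θ/2)^2 ≤ 1/2 := by
          have hm : Real.cos (θ/2) ≤ Real.cos (π/4) := by
            apply Real.cos_le_cos_of_nonneg_of_le_pi (by positivity)
              (by linarith [hθ.2]) (by linarith [hθ.1])
          have hnn : 0 ≤ Real.cos (θ/2) :=
            Real.cos_nonneg_of_mem_Icc ⟨by linarith, by linarith [hθ.2]⟩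
          have hval : Real.cos (π/4) = Real.sqrt 2 / 2 := Real.cos_pi_div_four
          calc Real.cos (θ/2)^2 ≤ (Real.sqrt 2 / 2)^2 := by
                apply pow_le_pow_left₀ hnn (hval ▸ hm) 2
            _ = 1/2 := by
                rw [div_pow, Real.sq_sqrt (by norm_num : (0:ℝ) ≤ 2)]
                norm_num
        calc Real.cos (θ/2) ^ (2*n) = (Real.cos (θ/2)^2)^n := by rw [pow_mul]
          _ ≤ (1/2:ℝ)^n := pow_le_pow_left₀ (sq_nonneg _) hc2 n
      have hsF := sF_le_right hp hθ.1 hθ.2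
      have hsFnn : 0 ≤ Real.sin θ ^ p * F p θ :=
        mul_nonneg (pow_nonneg (Real.sin_nonneg_of_nonneg_of_le_pi h0θ hθ.2) p)
          (F_nonneg h0θ hθ.2)
      calc w p n θ * F p θ = Real.cos (θ/2) ^ (2*n) * (Real.sin θ ^ p * F p θ) := by
            unfold w; ring
        _ ≤ (1/2:ℝ)^n * Kd p := by
            apply mul_le_mul hcos hsF hsFnn (by positivity)
        _ = Kd p * (1/2:ℝ)^n := by ring
  rw [intervalIntegral.integral_const, smul_eq_mul] at h1
  calc (∫ θ in (π/2)..π, w p n θ * F p θ) ≤ (π - π/2) * (Kd p * (1/2:ℝ)^n) := h1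
    _ = π/2 * Kd p * (1/2:ℝ)^n := by ring

-- lower bound for Jn
lemma Jn_ge (hp : 1 ≤ p) {n : ℕ} (hn : 1 ≤ n) :
    3/4 * (2/π)^p * ((2/π)^p / (p+1) / 2) / (p+3) * ((Real.sqrt n)^(p+3))⁻¹
      ≤ ∫ θ in (0:ℝ)..π, w p n θ * F p θ := by
  have hπ3 := pi_gt_three
  set a : ℝ := (Real.sqrt n)⁻¹ with ha
  have hs1 : (1:ℝ) ≤ Real.sqrt n := sqrt_ge_one hn
  have ha0 : 0 < a := by rw [ha]; positivity
  have ha1 : a ≤ 1 := (inv_anti₀ one_pos hs1).trans_eq inv_one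
  have haπ : a ≤ π := by linarith
  have hIa : IntervalIntegrable (fun θ => w p n θ * F p θ) volume 0 a :=
    (wF_int hp n).mono_set (by
      rw [Set.uIcc_of_le ha0.le, Set.uIcc_of_le pi_pos.le]
      exact Set.Icc_subset_Icc le_rfl haπ)
  have hIb : IntervalIntegrable (fun θ => w p n θ * F p θ) volume a π :=
    (wF_int hp n).mono_set (by
      rw [Set.uIcc_of_le haπ, Set.uIcc_of_le pi_pos.le]
      exact Set.Icc_subset_Icc ha0.le le_rfl)
  have hsplit : (∫ θ in (0:ℝ)..π, w p n θ * F p θ)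
      = (∫ θ in (0:ℝ)..a, w p n θ * F p θ) + ∫ θ in a..π, w p n θ * F p θ :=
    (intervalIntegral.integral_add_adjacent_intervals hIa hIb).symm
  have h2 : 0 ≤ ∫ θ in a..π, w p n θ * F p θ := by
    apply intervalIntegral.integral_nonneg haπ
    intro θ hθ
    exact wF_nonneg p n (le_trans ha0.le hθ.1) hθ.2
  have h1 : (∫ θ in (0:ℝ)..a, 3/4 * (2/π)^p * ((2/π)^p / (p+1) / 2) * θ^(p+2))
      ≤ ∫ θ in (0:ℝ)..a, w p n θ * F p θ := by
    apply intervalIntegral.integral_mono_on ha0.le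
    · exact (continuous_const.mul (continuous_pow (p+2))).intervalIntegrable _ _
    · exact hIa
    · intro θ hθ
      have hθ1 : θ ≤ 1 := hθ.2.trans ha1
      have hθ2 : θ ≤ π/2 := by linarith
      have hθπ : θ ≤ π := by linarith
      have hc : (3/4 : ℝ) ≤ Real.cos (θ/2) ^ (2*n) := cos_pow_ge hn hθ.1 hθ.2
      have hsin : 2/π * θ ≤ Real.sin θ := Real.mul_le_sin hθ.1 hθ2
      have hsp : (2/π * θ)^p ≤ Real.sin θ ^ p :=
        pow_le_pow_left₀ (mul_nonneg (by positivity) hθ.1) hsin p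
      have hF : (2/π)^p / (p+1) * (θ^2/2) ≤ F p θ := F_ge hθ.1 hθ1
      have hstep1 : (2/π * θ)^p * ((2/π)^p / (p+1) * (θ^2/2)) ≤ Real.sin θ ^ p * F p θ := by
        apply mul_le_mul hsp hF (by positivity) (pow_nonneg (Real.sin_nonneg_of_nonneg_of_le_pi hθ.1 hθπ) p)
      have hstep2 : 3/4 * ((2/π * θ)^p * ((2/π)^p / (p+1) * (θ^2/2)))
          ≤ Real.cos (θ/2) ^ (2*n) * (Real.sin θ ^ p * F p θ) := by
        apply mul_le_mul hc hstep1
          (mul_nonneg (pow_nonneg (mul_nonneg (by positivity) hθ.1) p) (by positivity))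
          ((even_two_mul n).pow_nonneg _)
      calc 3/4 * (2/π)^p * ((2/π)^p / (p+1) / 2) * θ^(p+2)
          = 3/4 * ((2/π * θ)^p * ((2/π)^p / (p+1) * (θ^2/2))) := by
            rw [mul_pow, pow_add]; ring
        _ ≤ Real.cos (θ/2) ^ (2*n) * (Real.sin θ ^ p * F p θ) := hstep2
        _ = w p n θ * F p θ := by unfold w; ring
  have hval : (∫ θ in (0:ℝ)..a, 3/4 * (2/π)^p * ((2/π)^p / (p+1) / 2) * θ^(p+2))
      = 3/4 * (2/π)^p * ((2/π)^p / (p+1) / 2) / (p+3) * ((Real.sqrt n)^(p+3))⁻¹ := by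
    rw [intervalIntegral.integral_const_mul, integral_pow]
    rw [zero_pow (by omega : p + 2 + 1 ≠ 0)]
    rw [ha, ← inv_pow]
    have : ((p:ℝ) + 2 + 1) = (p:ℝ) + 3 := by ring
    push_cast
    field_simp
    ring
  linarith [hval ▸ h1]


lemma alpha_bounds (p : ℕ) (hp : 1 ≤ p) : ∃ A > (0:ℝ), ∃ B > (0:ℝ), ∀ n : ℕ, 1 ≤ n →
    A / (n:ℝ) ≤ (∫ θ in (0:ℝ)..π, w p n θ)⁻¹ * (∫ θ in (0:ℝ)..π, w p n θ * F p θ) ∧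
    (∫ θ in (0:ℝ)..π, w p n θ)⁻¹ * (∫ θ in (0:ℝ)..π, w p n θ * F p θ) ≤ B / (n:ℝ) := by
  obtain ⟨K1, hK1pos, hK1⟩ := gauss_bound p
  obtain ⟨K2, hK2pos, hK2⟩ := gauss_bound (p+2)
  obtain ⟨M, hM⟩ := (tendsto_pow_const_mul_const_pow_of_lt_one (p+3)
    (by norm_num : (0:ℝ) ≤ 1/2) (by norm_num : (1/2:ℝ) < 1)).bddAbove_range
  have hMn : ∀ m : ℕ, ((m:ℝ))^(p+3) * (1/2:ℝ)^m ≤ M := fun m => hM ⟨m, rfl⟩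
  have hMpos : (0:ℝ) < M := by
    have := hMn 1
    norm_num at this
    linarith
  set cI : ℝ := 3/4 * (2/π)^p / (p+1) with hcI
  set cJ : ℝ := 3/4 * (2/π)^p * ((2/π)^p / (p+1) / 2) / (p+3) with hcJ
  set CJ : ℝ := (π/2)^p/2 * K2 + π/2 * Kd p * M with hCJ
  have hcIpos : 0 < cI := by rw [hcI]; positivity
  have hcJpos : 0 < cJ := by rw [hcJ]; positivity
  have hCJpos : 0 < CJ := by
    rw [hCJ]
    have := Kd_pos p
    have h1 : (0:ℝ) < (π/2)^p/2 * K2 := by positivity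
    have h2 : (0:ℝ) < π/2 * Kd p * M := by positivity
    linarith
  refine ⟨cJ / K1, by positivity, CJ / cI, by positivity, ?_⟩
  intro n hn
  set s : ℝ := Real.sqrt n with hs
  have hs1 : (1:ℝ) ≤ s := sqrt_ge_one hn
  have hspos : 0 < s := by linarith
  have hnR : (1:ℝ) ≤ (n:ℝ) := by exact_mod_cast hn
  have hnpos : (0:ℝ) < (n:ℝ) := by linarith
  have hs2 : s^2 = (n:ℝ) := Real.sq_sqrt (by positivity)
  set S1 : ℝ := s^(p+1) with hS1def
  set S2 : ℝ := s^(p+3) with hS2def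
  have hS1pos : 0 < S1 := by rw [hS1def]; positivity
  have hS2pos : 0 < S2 := by rw [hS2def]; positivity
  have hS2eq : S2 = S1 * (n:ℝ) := by
    rw [hS1def, hS2def, show p + 3 = (p+1) + 2 by ring, pow_add, hs2]
  set I : ℝ := ∫ θ in (0:ℝ)..π, w p n θ with hI
  set J : ℝ := ∫ θ in (0:ℝ)..π, w p n θ * F p θ with hJ
  have hIlow : cI * S1⁻¹ ≤ I := In_ge hn
  have hIhigh : I ≤ K1 * S1⁻¹ := (In_le_gauss n).trans (hK1 n hn)
  have hJlow : cJ * S2⁻¹ ≤ J := Jn_ge hp hn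
  have hJhigh : J ≤ CJ * S2⁻¹ := by
    have hsplit : J = (∫ θ in (0:ℝ)..(π/2), w p n θ * F p θ)
        + ∫ θ in (π/2)..π, w p n θ * F p θ := by
      rw [hJ]
      refine (intervalIntegral.integral_add_adjacent_intervals ?_ ?_).symm
      · exact (wF_int hp n).mono_set (by
          rw [Set.uIcc_of_le (by positivity : (0:ℝ) ≤ π/2), Set.uIcc_of_le pi_pos.le]
          exact Set.Icc_subset_Icc le_rfl (by linarith [pi_pos]))
      · exact (wF_int hp n).mono_set (by
          rw [Set.uIcc_of_le (by linarith [pi_pos] : (π/2:ℝ) ≤ π), Set.uIcc_of_le pi_pos.le]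
          exact Set.Icc_subset_Icc (by positivity) le_rfl)
    have hp1 : (∫ θ in (0:ℝ)..(π/2), w p n θ * F p θ) ≤ (π/2)^p/2 * (K2 * S2⁻¹) := by
      apply (J1_le hp n).trans
      apply mul_le_mul_of_nonneg_left _ (by positivity)
      rw [hS2def]
      exact hK2 n hn
    have hgeo : (1/2:ℝ)^n ≤ M * S2⁻¹ := by
      have h1 : ((n:ℝ))^(p+3) * (1/2:ℝ)^n ≤ M := hMn n
      have h2 : S2 ≤ ((n:ℝ))^(p+3) := by
        rw [hS2def]
        exact pow_le_pow_left₀ hspos.le (sqrt_le_n hn) (p+3)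
      have h3 : (1/2:ℝ)^n ≤ M * (((n:ℝ))^(p+3))⁻¹ := by
        rw [← div_eq_mul_inv, le_div_iff₀ (by positivity)]
        linarith [h1]
      apply h3.trans
      apply mul_le_mul_of_nonneg_left _ hMpos.le
      exact inv_anti₀ hS2pos h2
    have hp2 : (∫ θ in (π/2)..π, w p n θ * F p θ) ≤ π/2 * Kd p * (M * S2⁻¹) := by
      apply (J2_le hp n).trans
      apply mul_le_mul_of_nonneg_left hgeo
      have := Kd_pos p
      positivity
    calc J = (∫ θ in (0:ℝ)..(π/2), w p n θ * F p θ)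
            + ∫ θ in (π/2)..π, w p n θ * F p θ := hsplit
      _ ≤ (π/2)^p/2 * (K2 * S2⁻¹) + π/2 * Kd p * (M * S2⁻¹) := add_le_add hp1 hp2
      _ = CJ * S2⁻¹ := by rw [hCJ]; ring
  have hIpos : 0 < I := lt_of_lt_of_le (by positivity) hIlow
  have hJnn : 0 ≤ J := by
    rw [hJ]
    apply intervalIntegral.integral_nonneg pi_pos.le
    intro θ hθ
    exact wF_nonneg p n hθ.1 hθ.2
  constructor
  · have h1 : (K1 * S1⁻¹)⁻¹ ≤ I⁻¹ := inv_anti₀ hIpos hIhigh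
    have h2 : (K1 * S1⁻¹)⁻¹ * (cJ * S2⁻¹) ≤ I⁻¹ * J :=
      mul_le_mul h1 hJlow (by positivity) (inv_nonneg.2 hIpos.le)
    have heq : (K1 * S1⁻¹)⁻¹ * (cJ * S2⁻¹) = (cJ / K1) / (n:ℝ) := by
      rw [hS2eq]
      field_simp
    linarith [heq ▸ h2]
  · have h1 : I⁻¹ ≤ (cI * S1⁻¹)⁻¹ := inv_anti₀ (by positivity) hIlow
    have h2 : I⁻¹ * J ≤ (cI * S1⁻¹)⁻¹ * (CJ * S2⁻¹) :=
      mul_le_mul h1 hJhigh hJnn (by positivity)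
    have heq : (cI * S1⁻¹)⁻¹ * (CJ * S2⁻¹) = (CJ / cI) / (n:ℝ) := by
      rw [hS2eq]
      field_simp
    linarith [heq ▸ h2]


end Voro

open Voro in
/-- The Voronovskaya coefficient `α(n)` satisfies `A/n ≤ α(n) ≤ B/n`. -/
theorem voronovskaya_coefficient_bounds (d : ℕ) (hd : 3 ≤ d) :
    ∃ A > (0:ℝ), ∃ B > (0:ℝ), ∀ n : ℕ, 1 ≤ n →
      A / (n:ℝ) ≤
        (∫ θ in (0:ℝ)..π,
          (Real.cos (θ/2) ^ (2*n) /
            ∫ s in (0:ℝ)..π, Real.cos (s/2) ^ (2*n) * Real.sin s ^ (d - 2)) *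
          Real.sin θ ^ (d - 2) *
          (∫ t in (0:ℝ)..θ, Real.sin t ^ (-((d:ℝ) - 2)) *
            ∫ u in (0:ℝ)..t, Real.sin u ^ (d - 2))) ∧
      (∫ θ in (0:ℝ)..π,
          (Real.cos (θ/2) ^ (2*n) /
            ∫ s in (0:ℝ)..π, Real.cos (s/2) ^ (2*n) * Real.sin s ^ (d - 2)) *
          Real.sin θ ^ (d - 2) *
          (∫ t in (0:ℝ)..θ, Real.sin t ^ (-((d:ℝ) - 2)) *
            ∫ u in (0:ℝ)..t, Real.sin u ^ (d - 2))) ≤ B / (n:ℝ) := by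
  set p : ℕ := d - 2 with hpdef
  have hp : 1 ≤ p := by omega
  have hcastp : ((p:ℝ)) = (d:ℝ) - 2 := by
    rw [hpdef, Nat.cast_sub (by omega : 2 ≤ d)]
    norm_num
  obtain ⟨A, hA, B, hB, h⟩ := alpha_bounds p hp
  refine ⟨A, hA, B, hB, ?_⟩
  intro n hn
  have key : (∫ θ in (0:ℝ)..π,
        (Real.cos (θ/2) ^ (2*n) /
          ∫ s in (0:ℝ)..π, Real.cos (s/2) ^ (2*n) * Real.sin s ^ p) *
        Real.sin θ ^ p *
        (∫ t in (0:ℝ)..θ, Real.sin t ^ (-((d:ℝ) - 2)) *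
          ∫ u in (0:ℝ)..t, Real.sin u ^ p))
      = (∫ θ in (0:ℝ)..π, w p n θ)⁻¹ * (∫ θ in (0:ℝ)..π, w p n θ * F p θ) := by
    have hIn : (∫ s in (0:ℝ)..π, Real.cos (s/2) ^ (2*n) * Real.sin s ^ p)
        = ∫ θ in (0:ℝ)..π, w p n θ := rfl
    rw [← intervalIntegral.integral_const_mul]
    apply intervalIntegral.integral_congr
    intro θ hθ
    rw [Set.uIcc_of_le pi_pos.le] at hθ
    have hFeq : (∫ t in (0:ℝ)..θ, Real.sin t ^ (-((d:ℝ) - 2)) *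
          ∫ u in (0:ℝ)..t, Real.sin u ^ p) = ∫ t in (0:ℝ)..θ, g p t := by
      apply intervalIntegral.integral_congr
      intro t ht
      rw [Set.uIcc_of_le hθ.1] at ht
      have hsin : 0 ≤ Real.sin t :=
        Real.sin_nonneg_of_nonneg_of_le_pi ht.1 (ht.2.trans hθ.2)
      have : Real.sin t ^ (-((d:ℝ) - 2)) = (Real.sin t ^ p)⁻¹ := by
        rw [← hcastp, Real.rpow_neg hsin, Real.rpow_natCast]
      simp only [this, g, G]
    simp only [hFeq, hIn, w, F, g, G]
    ring
  rw [key]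
  exact h n hn
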